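/- Let (V,‖·‖) be a normed plane whose unit circle is an affine regular 2n-gon with n ≥ 3 odd, and let x, y be two consecutive vertices. Then ‖x − y‖ = √(2 − 2cos(π/n)). Conversely, if n ≥ 3 is even, this equality fails. -/

import Mathlib

open Module

variable {V : Type*} [NormedAddCommGroup V] [NormedSpace ℝ V]

noncomputable def sine {V : Type*} [NormedAddCommGroup V] [NormedSpace ℝ V] (x y : V) : ℝ :=
  ⨅ t : ℝ, ‖x + t • y‖

def BOrth {V : Type*} [NormedAddCommGroup V] [NormedSpace ℝ V] (x y : V) : Prop :=
  ∀ t : ℝ, ‖x‖ ≤ ‖x + t • y‖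

noncomputable def cD (V : Type*) [NormedAddCommGroup V] [NormedSpace ℝ V] : ℝ :=
  sInf {r : ℝ | ∃ x y : V, ‖x‖ = 1 ∧ ‖y‖ = 1 ∧ BOrth x y ∧ r = sine y x}

noncomputable def cR (V : Type*) [NormedAddCommGroup V] [NormedSpace ℝ V] : ℝ :=
  sSup {r : ℝ | ∃ x y : V, ‖x‖ = 1 ∧ ‖y‖ = 1 ∧ r = |sine x y - sine y x|}

noncomputable def vert (n k : ℕ) : ℝ × ℝ :=
  (Real.cos (2 * Real.pi * k / (2 * n)), Real.sin (2 * Real.pi * k / (2 * n)))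

namespace PolyAux
open Real

lemma vert_eq (n k : ℕ) (hn : (n:ℝ) ≠ 0) :
    vert n k = (Real.cos (π * k / n), Real.sin (π * k / n)) := by
  unfold vert
  have h : 2 * π * (k:ℝ) / (2 * n) = π * k / n := by field_simp
  rw [h]

lemma cos_piece (n m : ℕ) (hn : 1 ≤ n) (hm1 : 1 ≤ m) (hm2 : m ≤ 2*n) :
    cos (π * m / (2*n)) ≤ cos (π / (2*n)) := by
  have h2n : (0:ℝ) < 2*(n:ℝ) := by
    have : (1:ℝ) ≤ n := by exact_mod_cast hn
    linarith
  apply Real.cos_le_cos_of_nonneg_of_le_pi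
  · positivity
  · rw [div_le_iff₀ h2n]
    have : (m:ℝ) ≤ 2*n := by exact_mod_cast hm2
    nlinarith [Real.pi_pos]
  · have hm1' : (1:ℝ) ≤ (m:ℝ) := by exact_mod_cast hm1
    gcongr
    nlinarith [Real.pi_pos]

lemma cos_odd_le (n : ℕ) (hn : 1 ≤ n) : ∀ m : ℕ, Odd m →
    cos (π * m / (2*n)) ≤ cos (π / (2*n)) := by
  intro m
  induction m using Nat.strong_induction_on with
  | _ m ih =>
    intro hm
    have h2n : (0:ℝ) < 2*(n:ℝ) := by
      have : (1:ℝ) ≤ n := by exact_mod_cast hn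
      linarith
    by_cases h4 : 4*n ≤ m
    · have hmm : m - 4*n < m := by omega
      have hodd : Odd (m - 4*n) := Nat.Odd.sub_even h4 hm ⟨2*n, by ring⟩
      have hcast : (m:ℝ) = ((m - 4*n : ℕ):ℝ) + 4*n := by
        have : ((m - 4*n : ℕ):ℝ) = (m:ℝ) - 4*n := by push_cast [Nat.cast_sub h4]; ring
        rw [this]; ring
      have heq : π * m / (2*n) = π * ((m - 4*n:ℕ):ℝ) / (2*n) + 2*π := by
        rw [hcast]; field_simp; ring
      rw [heq, Real.cos_add_two_pi]
      exact ih _ hmm hodd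
    · by_cases h2 : m ≤ 2*n
      · exact cos_piece n m hn hm.pos h2
      · have h1 : 1 ≤ 4*n - m := by omega
        have h2' : 4*n - m ≤ 2*n := by omega
        have heq : π * m / (2*n) = 2*π - π * ((4*n - m : ℕ):ℝ) / (2*n) := by
          have : ((4*n - m : ℕ):ℝ) = 4*(n:ℝ) - m := by
            push_cast [Nat.cast_sub (by omega : m ≤ 4*n)]; ring
          rw [this]; field_simp; ring
        rw [heq, Real.cos_two_pi_sub]
        exact cos_piece n _ hn h1 h2'

lemma hull_le_halfspace {d : ℝ × ℝ} {r : ℝ} {s : Set (ℝ×ℝ)}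
    (h : ∀ p ∈ s, p.1 * d.1 + p.2 * d.2 ≤ r) :
    ∀ p ∈ convexHull ℝ s, p.1 * d.1 + p.2 * d.2 ≤ r := by
  have hlin : IsLinearMap ℝ (fun p : ℝ×ℝ => p.1 * d.1 + p.2 * d.2) := by
    constructor
    · intro x y; simp [Prod.fst_add, Prod.snd_add]; ring
    · intro c x; simp [Prod.smul_fst, Prod.smul_snd, smul_eq_mul]; ring
  intro p hp
  exact convexHull_min h (convex_halfSpace_le hlin r) hp

end PolyAux

open Real PolyAux in
theorem polygon_consecutive_vertices_dist (hV : finrank ℝ V = 2)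
    (n : ℕ) (hn : 3 ≤ n) (e : (ℝ × ℝ) ≃ₗ[ℝ] V)
    (hS : {w : V | ‖w‖ = 1} =
      ⇑e '' frontier (convexHull ℝ (Set.range fun k : Fin (2 * n) => vert n k))) :
    (Odd n → ‖e (vert n 0) - e (vert n 1)‖ = Real.sqrt (2 - 2 * Real.cos (Real.pi / n))) ∧
    (Even n → ‖e (vert n 0) - e (vert n 1)‖ ≠ Real.sqrt (2 - 2 * Real.cos (Real.pi / n))) := by
  have hnpos : 0 < (n:ℝ) := by exact_mod_cast (by omega : 0 < n)
  have hnne : (n:ℝ) ≠ 0 := ne_of_gt hnpos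
  have hn1 : (3:ℝ) ≤ (n:ℝ) := by exact_mod_cast hn
  set S : Set (ℝ × ℝ) := Set.range fun k : Fin (2 * n) => vert n k with hSdef
  set a : ℝ := π / (2*n) with ha
  have hapos : 0 < a := by rw [ha]; positivity
  have hapi : a < π := by
    rw [ha]
    exact div_lt_self Real.pi_pos (by linarith)
  have hsina : 0 < Real.sin a := Real.sin_pos_of_pos_of_lt_pi hapos hapi
  set c : ℝ := 2 * Real.sin a with hc
  have hcpos : 0 < c := by rw [hc]; positivity
  set u : ℝ × ℝ := (Real.sin a, - Real.cos a) with hu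
  -- sqrt identity
  have hsqrt : Real.sqrt (2 - 2*Real.cos (π/n)) = c := by
    have h2a : π / (n:ℝ) = 2*a := by rw [ha]; field_simp
    have pyth := Real.sin_sq_add_cos_sq a
    have hexp : 2 - 2*Real.cos (π/(n:ℝ)) = (2*Real.sin a)^2 := by
      rw [h2a, Real.cos_two_mul]; nlinarith
    rw [hexp, Real.sqrt_sq (by positivity)]
  -- the difference of consecutive vertices
  have hdiff : vert n 0 - vert n 1 = c • u := by
    rw [vert_eq n 0 hnne, vert_eq n 1 hnne]
    have h0 : π * ((0:ℕ):ℝ) / n = 0 := by simp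
    have h1 : π * ((1:ℕ):ℝ) / n = 2*a := by rw [ha]; push_cast; field_simp
    rw [h0, h1]
    have pyth := Real.sin_sq_add_cos_sq a
    have c2 := Real.cos_two_mul a
    have s2 := Real.sin_two_mul a
    rw [hu, hc, Prod.ext_iff]
    constructor
    · simp only [Prod.mk_sub_mk, Prod.smul_mk, smul_eq_mul, Real.cos_zero]
      nlinarith
    · simp only [Prod.mk_sub_mk, Prod.smul_mk, smul_eq_mul, Real.sin_zero]
      nlinarith
  have hmapdiff : e (vert n 0) - e (vert n 1) = c • e u := by
    rw [← map_sub, hdiff, map_smul]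
  have hnormdiff : ‖e (vert n 0) - e (vert n 1)‖ = c * ‖e u‖ := by
    rw [hmapdiff, norm_smul, Real.norm_eq_abs, abs_of_pos hcpos]
  have hclosed : IsClosed (convexHull ℝ S) :=
    ((Set.finite_range _).isCompact_convexHull ℝ).isClosed
  constructor
  · -- odd case
    intro hodd
    obtain ⟨l, hl⟩ := hodd
    have hl1 : 1 ≤ l := by omega
    -- the vertex j = 3l+2 equals u
    have hθ : π * (((3*l+2:ℕ)):ℝ) / n = π + π/2 + a := by
      rw [ha]
      subst hl
      push_cast
      field_simp
      ring
    have hvj : vert n (3*l+2) = u := by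
      rw [vert_eq n _ hnne, hθ, hu, Prod.mk.injEq]
      constructor <;> simp [Real.cos_add, Real.sin_add]
    have humem : u ∈ convexHull ℝ S := by
      rw [← hvj]
      exact subset_convexHull ℝ S ⟨⟨3*l+2, by omega⟩, rfl⟩
    -- halfspace bound for all points of the hull: f p ≤ 1 where f p = p.1 sin a - p.2 cos a
    have hbound : ∀ p ∈ convexHull ℝ S, p.1 * Real.sin a + p.2 * (-Real.cos a) ≤ 1 := by
      apply hull_le_halfspace (d := (Real.sin a, -Real.cos a))
      rintro p ⟨k, rfl⟩
      simp only [vert_eq n k hnne]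
      have : Real.cos (π * k / n) * Real.sin a + Real.sin (π * k / n) * (-Real.cos a)
          = Real.sin (a - π * k / n) := by rw [Real.sin_sub]; ring
      rw [this]
      exact Real.sin_le_one _
    -- u not in the interior
    have hnotint : u ∉ interior (convexHull ℝ S) := by
      intro hin
      have hnhds : convexHull ℝ S ∈ nhds u :=
        mem_interior_iff_mem_nhds.mp hin
      have hcont : Filter.Tendsto (fun t : ℝ => t • u) (nhds 1) (nhds u) := by
        have h := (continuous_id.smul (continuous_const : Continuous fun _ : ℝ => u)).tendsto 1
        exact (continuous_id.smul continuous_const).tendsto' 1 u (one_smul ℝ u)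
      have hev : {t : ℝ | t • u ∈ convexHull ℝ S} ∈ nhds (1:ℝ) := hcont hnhds
      rw [Metric.mem_nhds_iff] at hev
      obtain ⟨ε, hε, hball⟩ := hev
      have hmem : (1 + ε/2) • u ∈ convexHull ℝ S := by
        apply hball
        simp only [Metric.mem_ball, Real.dist_eq]
        rw [show (1 + ε/2 - 1) = ε/2 by ring, abs_of_pos (by positivity)]
        linarith
      have hb := hbound _ hmem
      have pyth := Real.sin_sq_add_cos_sq a
      simp only [hu, Prod.smul_mk, smul_eq_mul] at hb
      nlinarith
    have hfr : u ∈ frontier (convexHull ℝ S) :=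
      ⟨subset_closure humem, hnotint⟩
    have hnorm : ‖e u‖ = 1 := by
      have : e u ∈ {w : V | ‖w‖ = 1} := by rw [hS]; exact ⟨u, hfr, rfl⟩
      exact this
    rw [hnormdiff, hnorm, hsqrt, mul_one]
  · -- even case
    intro heven hcontra
    rw [hnormdiff, hsqrt] at hcontra
    have hnorm : ‖e u‖ = 1 := by
      have := mul_left_cancel₀ (ne_of_gt hcpos) (hcontra.trans (mul_one c).symm)
      exact this
    have hfr : u ∈ frontier (convexHull ℝ S) := by
      have hmem : e u ∈ {w : V | ‖w‖ = 1} := hnorm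
      rw [hS] at hmem
      obtain ⟨w, hw, hew⟩ := hmem
      rwa [← e.injective hew]
    have humem : u ∈ convexHull ℝ S := hclosed.frontier_subset hfr
    -- halfspace bound: all vertices have f p ≤ cos a
    have hbound : ∀ p ∈ convexHull ℝ S,
        p.1 * Real.sin a + p.2 * (-Real.cos a) ≤ Real.cos a := by
      apply hull_le_halfspace (d := (Real.sin a, -Real.cos a))
      rintro p ⟨k, rfl⟩
      simp only [vert_eq n (k:ℕ) hnne]
      have hstep : Real.cos (π * k / n) * Real.sin a + Real.sin (π * k / n) * (-Real.cos a)
          = Real.sin (a - π * k / n) := by rw [Real.sin_sub]; ring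
      rw [hstep, ← Real.cos_pi_div_two_sub]
      have hm : π/2 - (a - π * (k:ℕ) / n) = π * ((n - 1 + 2*(k:ℕ) : ℕ):ℝ) / (2*n) := by
        have : ((n - 1 + 2*(k:ℕ) : ℕ):ℝ) = (n:ℝ) - 1 + 2*(k:ℕ) := by
          push_cast [Nat.cast_sub (by omega : 1 ≤ n)]; ring
        rw [this, ha]; field_simp; ring
      rw [hm, show a = π / (2*(n:ℝ)) from ha]
      apply cos_odd_le n (by omega)
      rcases heven with ⟨t, ht⟩
      exact ⟨(n - 1 + 2*(k:ℕ) - 1)/2, by omega⟩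
    have hb := hbound u humem
    have pyth := Real.sin_sq_add_cos_sq a
    simp only [hu] at hb
    have hcoslt : Real.cos a < 1 := by
      have := Real.cos_lt_cos_of_nonneg_of_le_pi (le_refl 0) (le_of_lt hapi) hapos
      simpa using this
    nlinarith
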